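/- Pipeline form of Ψ: for every simple path p : Quiver.Path u v, the stateful list map Ψ p equals the elementwise stateful map of Φ p, i.e., Ψ p = stmap (Φ p) as functions List (obj u) × S → List (obj v) × S. (This equality expresses that the stagewise evaluation of Ψ along the path can be replaced by a per-element pipeline of Φ p, exhibiting the pipeline parallelism of smap.) -/

import Mathlib

noncomputable section

/-- The type of all arrows of a quiver. -/
abbrev QArr (V : Type) [Quiver.{0} V] : Type := Σ x : V, Σ y : V, x ⟶ y

section STC

variable {V : Type} [Quiver.{0} V] (obj : V → Type) (st : QArr V → Type)

/-- The global state: one state component per arrow. -/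
abbrev GState : Type := ∀ e : QArr V, st e

open Classical in
/-- Update the `e`-component of the global state, leaving the others unchanged. -/
def updState (σ : GState st) (e : QArr V) (x : st e) : GState st :=
  fun e' => if h : e' = e then cast (congrArg st h).symm x else σ e'

variable (φ : ∀ e : QArr V, obj e.1 × st e → obj e.2.1 × st e)

/-- The extension `φ* e` of the fundamental state thread `φ e` to the global state. -/
def phiExt (e : QArr V) : obj e.1 × GState st → obj e.2.1 × GState st :=
  fun z =>
    let r := φ e (z.1, z.2 e)
    (r.1, updState st z.2 e r.2)

/-- `Φ p` : composite of the extensions `φ*` along the arrows of the path `p`. -/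
def Phi {u : V} : ∀ {v : V}, Quiver.Path u v → (obj u × GState st → obj v × GState st)
  | _, .nil => id
  | _, .cons p e => fun z => phiExt obj st φ ⟨_, _, e⟩ (Phi p z)

/-- `ψ e` (curried auxiliary version): the stateful list map of `φ e`. -/
def psiAux (e : QArr V) : List (obj e.1) → st e → List (obj e.2.1) × st e
  | [], σ => ([], σ)
  | x :: xs, σ =>
    let r := φ e (x, σ)
    let r' := psiAux e xs r.2
    (r.1 :: r'.1, r'.2)

/-- `ψ e` : the stateful list map of the fundamental state thread `φ e`. -/
def psi (e : QArr V) : List (obj e.1) × st e → List (obj e.2.1) × st e :=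
  fun z => psiAux obj st φ e z.1 z.2

/-- The extension `ψ* e` of `ψ e` to the global state. -/
def psiExt (e : QArr V) : List (obj e.1) × GState st → List (obj e.2.1) × GState st :=
  fun z =>
    let r := psi obj st φ e (z.1, z.2 e)
    (r.1, updState st z.2 e r.2)

/-- `Ψ p` : composite of the extensions `ψ*` along the arrows of the path `p`. -/
def Psi {u : V} : ∀ {v : V}, Quiver.Path u v → (List (obj u) × GState st → List (obj v) × GState st)
  | _, .nil => id
  | _, .cons p e => fun z => psiExt obj st φ ⟨_, _, e⟩ (Psi p z)

/-- The list of arrows (as elements of `QArr V`) occurring in a path. -/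
def pathArrows {u : V} : ∀ {v : V}, Quiver.Path u v → List (QArr V)
  | _, .nil => []
  | _, .cons p e => ⟨_, _, e⟩ :: pathArrows p

/-- A path is simple if its arrows are pairwise distinct as elements of `QArr V`. -/
def SimplePath {u v : V} (p : Quiver.Path u v) : Prop := (pathArrows p).Nodup

/-- The stateful list map of a function `F : α × S → β × S` (auxiliary curried form). -/
def stmapAux {α β S : Type} (F : α × S → β × S) : List α → S → List β × S
  | [], σ => ([], σ)
  | x :: xs, σ =>
    let r := F (x, σ)
    let r' := stmapAux F xs r.2
    (r.1 :: r'.1, r'.2)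

/-- The stateful list map of a function `F : α × S → β × S`. -/
def stmap {α β S : Type} (F : α × S → β × S) : List α × S → List β × S :=
  fun z => stmapAux F z.1 z.2

end STC


section AuxLemmas

variable {V : Type} [Quiver.{0} V] {obj : V → Type} {st : QArr V → Type}
  (φ : ∀ e : QArr V, obj e.1 × st e → obj e.2.1 × st e)

lemma updState_self (σ : GState st) (e : QArr V) : updState st σ e (σ e) = σ := by
  funext e'
  unfold updState
  by_cases h : e' = e
  · subst h; simp
  · simp [h]

lemma updState_eval_self (σ : GState st) (e : QArr V) (x : st e) :
    updState st σ e x e = x := by simp [updState]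

lemma updState_eval_ne (σ : GState st) {e e' : QArr V} (h : e' ≠ e) (x : st e) :
    updState st σ e x e' = σ e' := by simp [updState, h]

lemma updState_idem (σ : GState st) (e : QArr V) (x y : st e) :
    updState st (updState st σ e x) e y = updState st σ e y := by
  funext e'
  unfold updState
  by_cases h : e' = e <;> simp [h]

lemma updState_comm (σ : GState st) {e e' : QArr V} (h : e ≠ e') (x : st e) (y : st e') :
    updState st (updState st σ e x) e' y = updState st (updState st σ e' y) e x := by
  funext a
  unfold updState
  by_cases h1 : a = e'
  · subst h1
    rw [dif_pos rfl, dif_neg (fun hh : a = e => h hh.symm), dif_pos rfl]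
  · rw [dif_neg h1]
    by_cases h2 : a = e
    · subst h2
      rw [dif_pos rfl, dif_pos rfl]
    · rw [dif_neg h2, dif_neg h2, dif_neg h1]

/-- `F` commutes with updating the `e`-component of the global state. -/
def Commutes (e : QArr V) {α β : Type} (F : α × GState st → β × GState st) : Prop :=
  ∀ x σ s, F (x, updState st σ e s) = ((F (x, σ)).1, updState st (F (x, σ)).2 e s)

lemma commutes_snd {e : QArr V} {α β : Type} {F : α × GState st → β × GState st}
    (hF : Commutes e F) (x : α) (σ : GState st) : (F (x, σ)).2 e = σ e := by
  have h := hF x σ (σ e)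
  rw [updState_self] at h
  conv_lhs => rw [h]
  exact updState_eval_self _ _ _

lemma phi_commutes {u v : V} (p : Quiver.Path u v) {e : QArr V}
    (he : e ∉ pathArrows p) : Commutes e (Phi obj st φ p) := by
  induction p with
  | nil => intro x σ s; rfl
  | cons p a ih =>
    simp only [pathArrows, List.mem_cons, not_or] at he
    intro x σ s
    simp only [Phi]
    rw [ih he.2 x σ s]
    simp only [phiExt]
    rw [updState_eval_ne _ (Ne.symm he.1), updState_comm _ he.1]

lemma stmapAux_commutes {e : QArr V} {α β : Type} {F : α × GState st → β × GState st}
    (hF : Commutes e F) : ∀ (xs : List α) (σ : GState st) (s : st e),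
    stmapAux F xs (updState st σ e s) =
      ((stmapAux F xs σ).1, updState st (stmapAux F xs σ).2 e s)
  | [], σ, s => rfl
  | x :: xs, σ, s => by
    simp only [stmapAux]
    rw [hF x σ s]
    simp only
    rw [stmapAux_commutes hF xs (F (x, σ)).2 s]

lemma stmapAux_snd {e : QArr V} {α β : Type} {F : α × GState st → β × GState st}
    (hF : Commutes e F) : ∀ (xs : List α) (σ : GState st),
    (stmapAux F xs σ).2 e = σ e
  | [], σ => rfl
  | x :: xs, σ => by
    simp only [stmapAux]
    rw [stmapAux_snd hF xs, commutes_snd hF]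

lemma psiExt_stmapAux {e : QArr V} {α : Type} {F : α × GState st → obj e.1 × GState st}
    (hF : Commutes e F) : ∀ (xs : List α) (σ : GState st),
    psiExt obj st φ e (stmapAux F xs σ) =
      stmapAux (fun z => phiExt obj st φ e (F z)) xs σ
  | [], σ => by
    simp only [stmapAux, psiExt, psi, psiAux]
    exact Prod.ext rfl (updState_self σ e)
  | x :: xs, σ => by
    have hσ1 : (F (x, σ)).2 e = σ e := commutes_snd hF x σ
    have hσ2 : (stmapAux F xs (F (x, σ)).2).2 e = σ e := by
      rw [stmapAux_snd hF, hσ1]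
    have hrec := psiExt_stmapAux hF xs ((phiExt obj st φ e (F (x, σ))).2)
    simp only [stmapAux]
    rw [← hrec]
    simp only [psiExt, psi, psiAux, phiExt]
    rw [stmapAux_commutes hF xs]
    simp only [updState_eval_self, updState_idem, hσ1, hσ2]

lemma stmapAux_id {α S : Type} {F : α × S → α × S} (hF : ∀ z, F z = z) :
    ∀ (xs : List α) (σ : S), stmapAux F xs σ = (xs, σ)
  | [], σ => rfl
  | x :: xs, σ => by simp only [stmapAux, hF, stmapAux_id hF xs]

end AuxLemmas

/-- pipeline form of `Ψ`: on a simple path `p`, the stagewise stateful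
list map `Ψ p` coincides with the per-element pipeline `stmap (Φ p)`. -/
theorem Psi_eq_stmap_Phi {V : Type} [Quiver.{0} V] (obj : V → Type) (st : QArr V → Type)
    (φ : ∀ e : QArr V, obj e.1 × st e → obj e.2.1 × st e)
    (u v : V) (p : Quiver.Path u v) (hp : SimplePath p) :
    Psi obj st φ p = stmap (Phi obj st φ p) := by
  induction p with
  | nil =>
    funext z
    show z = stmapAux _ z.1 z.2
    exact (stmapAux_id (fun w => rfl) z.1 z.2).symm
  | cons p a ih =>
    rw [SimplePath, pathArrows, List.nodup_cons] at hp
    funext z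
    simp only [Psi]
    rw [ih hp.2]
    exact psiExt_stmapAux φ (phi_commutes φ p hp.1) z.1 z.2
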